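/- Let q ∈ {2,3}, k ≥ 2, n = q^k − 1, and let g⊥(x) ∈ 𝔽_q[x] be a monic irreducible polynomial of degree k (note g⊥ then divides x^n − 1). Let w = (w_1,…,w_n) ∈ 𝔽_q^n be the word with g(x) := (x^n−1)/g⊥(x) = Σ_{j=1}^n w_j x^{j−1}, and fix any linear order on 𝔽_q (used to define cdes). Then g⊥ is primitive (the image of x in 𝔽_q[x]/(g⊥(x)) has multiplicative order n) if and only if 2·cdes(w) = (q−1)·q^{k−1}. -/

import Mathlib

open Finset Polynomial


lemma auxSumMod {f : ℕ → ℕ} (e t : ℕ) :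
    ∑ j ∈ range (t * e), f (j % e) = t * ∑ j ∈ range e, f (j % e) := by
  induction t with
  | zero => simp
  | succ t ih =>
    have h : (t + 1) * e = t * e + e := by ring
    rw [h, Finset.sum_range_add, ih]
    have h2 : ∀ x ∈ range e, f ((t * e + x) % e) = f (x % e) := by
      intro x _
      have : (t * e + x) % e = x % e := by
        rw [add_comm, Nat.add_mul_mod_self_right]
      rw [this]
    rw [Finset.sum_congr rfl h2]
    ring

lemma auxPairs (F : Type*) [Fintype F] [LinearOrder F] :
    2 * (Finset.univ.filter fun p : F × F => p.1 < p.2).card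
      = Fintype.card F * Fintype.card F - Fintype.card F := by
  classical
  have hswap : (Finset.univ.filter fun p : F × F => p.1 < p.2).card
      = (Finset.univ.filter fun p : F × F => p.2 < p.1).card := by
    apply Finset.card_bij (fun p _ => Prod.swap p)
    · intro p hp; simp only [mem_filter, mem_univ, true_and] at *; exact hp
    · intro p _ q _ h; exact Prod.swap_injective h
    · intro p hp; exact ⟨Prod.swap p, by simpa using hp, by simp⟩
  have hdiag : (Finset.univ.filter fun p : F × F => p.1 = p.2).card = Fintype.card F := by
    rw [show (Finset.univ.filter fun p : F × F => p.1 = p.2)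
        = Finset.univ.image (fun a : F => (a, a)) by
      ext p; simp only [mem_filter, mem_univ, true_and, mem_image]
      constructor
      · intro h; exact ⟨p.1, by rw [Prod.ext_iff]; exact ⟨rfl, h⟩⟩
      · rintro ⟨a, rfl⟩; rfl]
    rw [Finset.card_image_of_injective _ (fun a b h => (Prod.ext_iff.mp h).1)]
    simp
  have htot : (Finset.univ.filter fun p : F × F => p.1 < p.2).card
      + ((Finset.univ.filter fun p : F × F => p.2 < p.1).card
        + (Finset.univ.filter fun p : F × F => p.1 = p.2).card)
      = Fintype.card F * Fintype.card F := by
    rw [← Fintype.card_prod, ← Finset.card_univ,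
      ← Finset.card_union_of_disjoint, ← Finset.card_union_of_disjoint]
    · congr 1
      ext p
      simp only [mem_union, mem_filter, mem_univ, true_and, iff_true]
      rcases lt_trichotomy p.1 p.2 with h | h | h
      · exact Or.inl h
      · exact Or.inr (Or.inr h)
      · exact Or.inr (Or.inl h)
    · rw [Finset.disjoint_left]
      intro p hp hq
      simp only [mem_union, mem_filter, mem_univ, true_and] at hp hq
      rcases hq with h | h
      · exact absurd h (lt_asymm hp)
      · exact absurd h (ne_of_lt hp)
    · rw [Finset.disjoint_left]
      intro p hp hq
      simp only [mem_filter, mem_univ, true_and] at hp hq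
      exact absurd hq (ne_of_gt hp)
  omega



/-- The (leftward) cyclic shift on words of length `n`:
`c(w₁,…,wₙ) = (w₂,…,wₙ,w₁)`. -/
def cshift {A : Type*} {n : ℕ} (w : Fin n → A) : Fin n → A :=
  fun i => w ⟨((i : ℕ) + 1) % n, Nat.mod_lt _ i.pos⟩

/-- The major index of a word: `maj w = Σ_{1 ≤ i ≤ n-1, w_i > w_{i+1}} i`
(here positions are 0-indexed, so position `i : Fin n` is the `(i+1)`-st letter). -/
def majIdx {A : Type*} [LinearOrder A] {n : ℕ} (w : Fin n → A) : ℕ :=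
  ∑ i : Fin n,
    if h : (i : ℕ) + 1 < n then (if w ⟨(i : ℕ) + 1, h⟩ < w i then (i : ℕ) + 1 else 0) else 0

/-- The number of cyclic descents of a word, `cdes w = #{i : w_i > w_{i+1}}`
with indices read cyclically (`w_{n+1} := w_1`). -/
def cdes {A : Type*} [LinearOrder A] {n : ℕ} (w : Fin n → A) : ℕ :=
  (Finset.univ.filter fun i : Fin n =>
    w ⟨((i : ℕ) + 1) % n, Nat.mod_lt _ i.pos⟩ < w i).card

/-- The inversion number of a word: `inv w = #{(i,j) : i < j, w_i > w_j}`. -/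
def invNum {A : Type*} [LinearOrder A] {n : ℕ} (w : Fin n → A) : ℕ :=
  (Finset.univ.filter fun p : Fin n × Fin n => p.1 < p.2 ∧ w p.2 < w p.1).card

/-- The Hamming weight of a binary word: the number of ones. -/
def wt {n : ℕ} (w : Fin n → Bool) : ℕ :=
  (Finset.univ.filter fun i => w i = true).card

/-- The triple `(X, Σ_{x ∈ X} t^{stat x}, C)` exhibits the cyclic sieving phenomenon,
where `C` is the cyclic group of order `n` generated by the cyclic shift `c` acting on `X`:
for every `d`, the number of fixed points of `c^d` on `X` equals the evaluation of
`Σ_{x ∈ X} t^{stat x}` at `t = ζ^d`, with `ζ = exp(2πi/n)`. -/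
def exhibitsCSP {A : Type*} [DecidableEq A] {n : ℕ} (X : Finset (Fin n → A))
    (stat : (Fin n → A) → ℕ) : Prop :=
  ∀ d : ℕ,
    ((X.filter fun v => cshift^[d] v = v).card : ℂ) =
      ∑ v ∈ X, Complex.exp (2 * (Real.pi : ℂ) * Complex.I / n) ^ (d * stat v)

/-- The polynomial `w₁ + w₂ x + ⋯ + wₙ x^{n-1}` associated to a word `w ∈ F^n` under
the standard identification of `F^n` with `F[x]/(xⁿ-1)`.  A word `w` belongs to the
cyclic code generated by a monic divisor `g` of `xⁿ - 1` exactly when `g ∣ wordPoly w`. -/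
noncomputable def wordPoly {F : Type*} [CommRing F] {n : ℕ} (w : Fin n → F) :
    Polynomial F :=
  ∑ i : Fin n, Polynomial.C (w i) * Polynomial.X ^ (i : ℕ)

set_option maxHeartbeats 1600000 in
/-- let q ∈ {2,3}, k ≥ 2, n = q^k - 1, gperp monic irreducible of degree
k in F_q[x] (which then divides x^n - 1), g = (x^n - 1)/gperp with corresponding word
w, and fix any linear order on F_q.  Then gperp is primitive if and only if
2·cdes(w) = (q-1)·q^{k-1}. -/
theorem stmt17 {F : Type*} [Field F] [Fintype F] [LinearOrder F]
    (hq : Fintype.card F = 2 ∨ Fintype.card F = 3) (k : ℕ) (hk : 2 ≤ k)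
    (n : ℕ) (hn : n = Fintype.card F ^ k - 1)
    (gperp : Polynomial F) (hmonic : gperp.Monic) (hirr : Irreducible gperp)
    (hdeg : gperp.natDegree = k)
    (g : Polynomial F) (hg : g * gperp = Polynomial.X ^ n - 1)
    (w : Fin n → F) (hw : ∀ i : Fin n, w i = g.coeff (i : ℕ)) :
    orderOf (AdjoinRoot.root gperp) = n ↔
      2 * cdes w = (Fintype.card F - 1) * Fintype.card F ^ (k - 1) := by
  classical
  classical
  have hq2 : 2 ≤ Fintype.card F := by rcases hq with h | h <;> omega
  have hqq : Fintype.card F * Fintype.card F ≤ Fintype.card F ^ k := by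
    calc Fintype.card F * Fintype.card F = Fintype.card F ^ 2 := by ring
    _ ≤ Fintype.card F ^ k := Nat.pow_le_pow_right (by omega) hk
  have hn3 : 3 ≤ n := by
    have : 4 ≤ Fintype.card F * Fintype.card F := by nlinarith
    omega
  have hn0 : 0 < n := by omega
  have hkn : k ≤ n := by
    have : k < 2 ^ k := Nat.lt_two_pow_self (n := k)
    have h2 : 2 ^ k ≤ Fintype.card F ^ k := Nat.pow_le_pow_left hq2 k
    omega
  have hg0 : gperp ≠ 0 := hmonic.ne_zero
  haveI : Fact (Irreducible gperp) := ⟨hirr⟩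
  haveI : Finite (AdjoinRoot gperp) := by
    haveI := Module.Finite.of_basis (AdjoinRoot.powerBasis hg0).basis
    exact Module.finite_of_finite F (M := AdjoinRoot gperp)
  haveI : Fintype (AdjoinRoot gperp) := Fintype.ofFinite _
  have hcardK : Fintype.card (AdjoinRoot gperp) = Fintype.card F ^ k := by
    rw [Module.card_fintype (AdjoinRoot.powerBasis hg0).basis, Fintype.card_fin,
      AdjoinRoot.powerBasis_dim, hdeg]
  set α := AdjoinRoot.root gperp with hα
  have hXn : (X : Polynomial F) ^ n - 1 ≠ 0 := by
    have := Polynomial.X_pow_sub_C_ne_zero (R := F) hn0 1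
    simpa using this
  have hgne : g ≠ 0 := by
    intro h; rw [h, zero_mul] at hg; exact hXn hg.symm
  have hdegXn : ((X : Polynomial F) ^ n - 1).natDegree = n := by
    have := Polynomial.natDegree_X_pow_sub_C (R := F) (n := n) (r := 1)
    simpa using this
  have hdegg : g.natDegree + k = n := by
    have := Polynomial.natDegree_mul hgne hg0
    rw [hg, hdegXn, hdeg] at this; omega
  have hglead : g.coeff (n - k) = 1 := by
    have h1 : g.leadingCoeff * gperp.leadingCoeff = 1 := by
      rw [← Polynomial.leadingCoeff_mul, hg]
      have : ((X : Polynomial F) ^ n - 1).Monic := by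
        have := Polynomial.monic_X_pow_sub_C (R := F) 1 (by omega : n ≠ 0)
        simpa using this
      exact this
    rw [hmonic.leadingCoeff, mul_one] at h1
    have : n - k = g.natDegree := by omega
    rw [this]; exact h1
  -- α^n = 1
  have hαn : α ^ n = 1 := by
    have h0 : AdjoinRoot.mk gperp (g * gperp) = 0 := by
      rw [map_mul, AdjoinRoot.mk_self, mul_zero]
    rw [hg, map_sub, map_pow, map_one, AdjoinRoot.mk_X] at h0
    have := sub_eq_zero.mp h0
    simpa using this
  have hα0 : α ≠ 0 := by
    intro h
    rw [h, zero_pow (by omega : n ≠ 0)] at hαn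
    exact zero_ne_one hαn

  -- the linear recurrence satisfied by the coefficients of g
  have hrec : ∀ d : ℕ, k ≤ d → d < n →
      (∑ b ∈ range k, g.coeff (d - k + b) * gperp.coeff (k - b)) + g.coeff d * gperp.coeff 0 = 0 := by
    intro d hkd hdn
    have h0 : ((X : Polynomial F) ^ n - 1).coeff d = 0 := by
      rw [Polynomial.coeff_sub, Polynomial.coeff_X_pow, Polynomial.coeff_one]
      rw [if_neg (by omega), if_neg (by omega)]
      ring
    rw [← hg, Polynomial.coeff_mul, Finset.Nat.sum_antidiagonal_eq_sum_range_succ_mk] at h0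
    have h2 : ∑ b ∈ range (d+1), g.coeff (d - b) * gperp.coeff b
        = ∑ b ∈ range (d+1), g.coeff b * gperp.coeff (d - b) := by
      rw [← Finset.sum_range_reflect (fun b => g.coeff b * gperp.coeff (d - b)) (d+1)]
      apply Finset.sum_congr rfl
      intro b hb
      simp only [mem_range] at hb
      have e1 : d + 1 - 1 - b = d - b := by omega
      have e2 : d - (d - b) = b := by omega
      simp only [e1, e2]
    rw [← h2] at h0
    have h3 : ∑ b ∈ range (d+1), g.coeff (d - b) * gperp.coeff b
        = ∑ b ∈ range (k+1), g.coeff (d - b) * gperp.coeff b := by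
      symm
      apply Finset.sum_subset
      · intro x hx; simp only [mem_range] at *; omega
      · intro x hx hxk
        simp only [mem_range] at hx hxk
        have : gperp.coeff x = 0 := Polynomial.coeff_eq_zero_of_natDegree_lt (by omega)
        rw [this, mul_zero]
    rw [h3] at h0
    have h4 : ∑ b ∈ range (k+1), g.coeff (d - b) * gperp.coeff b
        = ∑ b ∈ range (k+1), g.coeff (d - k + b) * gperp.coeff (k - b) := by
      rw [← Finset.sum_range_reflect (fun b => g.coeff (d - k + b) * gperp.coeff (k - b)) (k+1)]
      apply Finset.sum_congr rfl
      intro b hb; simp only [mem_range] at hb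
      have e1 : k + 1 - 1 - b = k - b := by omega
      have e2 : d - k + (k - b) = d - b := by omega
      have e3 : k - (k - b) = b := by omega
      simp only [e1, e2, e3]
    rw [h4, Finset.sum_range_succ, Nat.sub_add_cancel hkd, Nat.sub_self] at h0
    exact h0
  have hc0 : gperp.coeff 0 ≠ 0 := by
    intro h
    obtain ⟨u, hu⟩ := Polynomial.X_dvd_iff.mpr h
    rcases hirr.isUnit_or_isUnit hu with h1 | h1
    · exact Polynomial.not_isUnit_X h1
    · have hu0 : u ≠ 0 := by rintro rfl; rw [mul_zero] at hu; exact hg0 hu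
      have h5 := Polynomial.natDegree_mul (Polynomial.X_ne_zero (R := F)) hu0
      rw [← hu, hdeg, Polynomial.natDegree_X, Polynomial.natDegree_eq_zero_of_isUnit h1] at h5
      omega
  set β := α⁻¹ with hβdef
  have hβ0 : β ≠ 0 := inv_ne_zero hα0
  have hαβ1 : α * β = 1 := mul_inv_cancel₀ hα0
  have hpow : ∀ a b : ℕ, a ≤ b → α ^ a * β ^ b = β ^ (b - a) := by
    intro a b hab
    calc α ^ a * β ^ b = α ^ a * (β ^ (b - a) * β ^ a) := by
          rw [← pow_add, Nat.sub_add_cancel hab]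
    _ = β ^ (b-a) * (α * β) ^ a := by rw [mul_pow]; ring
    _ = β ^ (b-a) := by rw [hαβ1, one_pow, mul_one]
  have hpow2 : ∀ a b : ℕ, b ≤ a → α ^ a * β ^ b = α ^ (a - b) := by
    intro a b hab
    calc α ^ a * β ^ b = α ^ (a - b) * α ^ b * β ^ b := by
          rw [← pow_add, Nat.sub_add_cancel hab]
    _ = α ^ (a - b) * (α * β) ^ b := by rw [mul_pow]; ring
    _ = α ^ (a-b) := by rw [hαβ1, one_pow, mul_one]
  have hβn : β ^ n = 1 := by
    have h6 := hpow n n le_rfl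
    rw [hαn, one_mul, Nat.sub_self, pow_zero] at h6
    exact h6
  have haev : ∑ b ∈ range (k+1), gperp.coeff b • α ^ b = 0 := by
    have h := AdjoinRoot.aeval_eq (f := gperp) gperp
    rw [AdjoinRoot.mk_self] at h
    rw [Polynomial.aeval_eq_sum_range, hdeg] at h
    exact h
  have hβsum : ∑ b ∈ range (k+1), gperp.coeff (k - b) • β ^ b = 0 := by
    have h1 : ∑ b ∈ range (k+1), gperp.coeff b • (α ^ b * β ^ k) = 0 := by
      have h7 := congrArg (· * β ^ k) haev
      simpa [Finset.sum_mul, smul_mul_assoc] using h7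
    have h2 : ∑ b ∈ range (k+1), gperp.coeff b • β ^ (k - b) = 0 := by
      rw [← h1]; apply Finset.sum_congr rfl; intro b hb
      simp only [mem_range] at hb
      rw [hpow b k (by omega)]
    rw [← Finset.sum_range_reflect (fun b => gperp.coeff (k - b) • β ^ b) (k+1)]
    rw [← h2]
    apply Finset.sum_congr rfl; intro b hb
    simp only [mem_range] at hb
    have e1 : k + 1 - 1 - b = k - b := by omega
    have e2 : k - (k - b) = b := by omega
    simp only [e1, e2]
  have hβk : β ^ k = ∑ b ∈ range k, (-(gperp.coeff 0)⁻¹ * gperp.coeff (k - b)) • β ^ b := by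
    rw [Finset.sum_range_succ, Nat.sub_self] at hβsum
    have h2 : gperp.coeff 0 • β ^ k = -∑ b ∈ range k, gperp.coeff (k - b) • β ^ b :=
      eq_neg_of_add_eq_zero_right hβsum
    have h3 := congrArg (fun x : AdjoinRoot gperp => (gperp.coeff 0)⁻¹ • x) h2
    simp only [smul_smul, inv_mul_cancel₀ hc0, one_smul] at h3
    rw [h3, smul_neg, Finset.smul_sum, ← Finset.sum_neg_distrib]
    apply Finset.sum_congr rfl; intro b _
    rw [smul_smul, ← neg_smul]
    congr 1
    ring
  -- the linear functional L
  have hdim : (AdjoinRoot.powerBasis hg0).dim = k := by rw [AdjoinRoot.powerBasis_dim, hdeg]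
  set M : AdjoinRoot gperp →ₗ[F] F :=
    (AdjoinRoot.powerBasis hg0).basis.constr F
      (fun j : Fin (AdjoinRoot.powerBasis hg0).dim => g.coeff (k - 1 - (j : ℕ))) with hM
  have hMα : ∀ i : ℕ, i < k → M (α ^ i) = g.coeff (k - 1 - i) := by
    intro i hi
    have hi' : i < (AdjoinRoot.powerBasis hg0).dim := by omega
    have hb : (AdjoinRoot.powerBasis hg0).basis ⟨i, hi'⟩ = α ^ i := by
      rw [PowerBasis.basis_eq_pow, AdjoinRoot.powerBasis_gen]
    rw [← hb, hM, Module.Basis.constr_basis]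
  set L : AdjoinRoot gperp →ₗ[F] F := M.comp (LinearMap.mulLeft F (α ^ (k-1))) with hLdef
  have hLapp : ∀ x, L x = M (α ^ (k-1) * x) := fun x => rfl
  have hLbase : ∀ j : ℕ, j < k → L (β ^ j) = g.coeff j := by
    intro j hj
    rw [hLapp, hpow2 (k-1) j (by omega), hMα (k-1-j) (by omega)]
    congr 1; omega
  have hL : ∀ m : ℕ, m < n → L (β ^ m) = g.coeff m := by
    intro m
    induction m using Nat.strong_induction_on with
    | _ m ih =>
      intro hmn
      by_cases hmk : m < k
      · exact hLbase m hmk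
      · push_neg at hmk
        have him : m - k + k = m := by omega
        have h2 : β ^ m = ∑ b ∈ range k,
            (-(gperp.coeff 0)⁻¹ * gperp.coeff (k - b)) • β ^ (m - k + b) := by
          calc β ^ m = β ^ (m - k) * β ^ k := by rw [← pow_add]; congr 1; omega
          _ = ∑ b ∈ range k, (-(gperp.coeff 0)⁻¹ * gperp.coeff (k - b)) • (β ^ (m-k) * β ^ b) := by
              rw [hβk, Finset.mul_sum]
              apply Finset.sum_congr rfl; intro b _
              rw [mul_smul_comm]
          _ = ∑ b ∈ range k, (-(gperp.coeff 0)⁻¹ * gperp.coeff (k - b)) • β ^ (m - k + b) := by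
              apply Finset.sum_congr rfl; intro b _
              rw [← pow_add]
        rw [h2, map_sum]
        have h3 : ∀ b ∈ range k, L ((-(gperp.coeff 0)⁻¹ * gperp.coeff (k - b)) • β ^ (m - k + b))
            = (-(gperp.coeff 0)⁻¹ * gperp.coeff (k - b)) * g.coeff (m - k + b) := by
          intro b hb
          simp only [mem_range] at hb
          rw [map_smul, ih (m - k + b) (by omega) (by omega), smul_eq_mul]
        rw [Finset.sum_congr rfl h3]
        have h4 := hrec m hmk hmn
        have h5 : ∑ b ∈ range k, (-(gperp.coeff 0)⁻¹ * gperp.coeff (k - b)) * g.coeff (m - k + b)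
            = (-(gperp.coeff 0)⁻¹) * ∑ b ∈ range k, g.coeff (m - k + b) * gperp.coeff (k - b) := by
          rw [Finset.mul_sum]
          apply Finset.sum_congr rfl; intro b _; ring
        rw [h5, eq_neg_of_add_eq_zero_left h4]
        field_simp

  have hmod : ∀ d : ℕ, β ^ d = 1 → ∀ j : ℕ, β ^ j = β ^ (j % d) := by
    intro d hd j
    conv_lhs => rw [← Nat.div_add_mod j d]
    rw [pow_add, pow_mul, hd, one_pow, one_mul]
  have hcdes : cdes w = ((range n).filter (fun j => L (β ^ (j+1)) < L (β ^ j))).card := by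
    unfold cdes
    rw [Finset.card_filter, Finset.card_filter]
    rw [← Fin.sum_univ_eq_sum_range (fun j => if L (β ^ (j+1)) < L (β ^ j) then (1:ℕ) else 0) n]
    apply Finset.sum_congr rfl
    intro i _
    have e1 : w i = L (β ^ (i : ℕ)) := by rw [hw i, hL _ i.isLt]
    have e2 : w ⟨((i:ℕ)+1) % n, Nat.mod_lt _ i.pos⟩ = L (β ^ ((i:ℕ)+1)) := by
      rw [hw, hmod n hβn ((i:ℕ)+1)]
      exact (hL _ (Nat.mod_lt _ hn0)).symm
    rw [e1, e2]
  have hLβnk : L (β ^ (n - k)) = 1 := by rw [hL (n-k) (by omega), hglead]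
  constructor
  · -- primitive implies the cdes identity
    intro hord'
    have hord : orderOf α = n := hord'
    have hinj2 : ∀ a b : ℕ, a ≤ b → b < n → β ^ a = β ^ b → a = b := by
      intro a b hab hbn heq
      have h1 : α ^ (b - a) = 1 := by
        have h2 := congrArg (fun x => α ^ b * x) heq
        rw [hpow2 b a hab, hpow2 b b le_rfl, Nat.sub_self, pow_zero] at h2
        rw [← h2]
      have h2 : n ∣ b - a := by
        have := orderOf_dvd_of_pow_eq_one h1
        rwa [hord] at this
      have := Nat.eq_zero_of_dvd_of_lt h2 (by omega)
      omega
    have hsub : (range n).image (β ^ ·) ⊆ Finset.univ.filter (fun x : AdjoinRoot gperp => x ≠ 0) := by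
      intro x hx
      simp only [Finset.mem_image, mem_range] at hx
      obtain ⟨j, _, rfl⟩ := hx
      simp only [Finset.mem_filter, Finset.mem_univ, true_and]
      exact pow_ne_zero _ hβ0
    have hinjOn : Set.InjOn (β ^ ·) ↑(range n) := by
      intro x hx y hy hxy
      simp only [Finset.coe_range, Set.mem_Iio] at hx hy
      rcases le_total x y with h | h
      · exact hinj2 x y h hy hxy
      · exact (hinj2 y x h hx hxy.symm).symm
    have hcard1 : ((range n).image (β ^ ·)).card = n := by
      rw [Finset.card_image_of_injOn hinjOn, Finset.card_range]
    have hcard2 : (Finset.univ.filter (fun x : AdjoinRoot gperp => x ≠ 0)).card = n := by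
      rw [Finset.filter_ne', Finset.card_erase_of_mem (Finset.mem_univ 0), Finset.card_univ,
        hcardK]
      omega
    have himage : (range n).image (β ^ ·)
        = Finset.univ.filter (fun x : AdjoinRoot gperp => x ≠ 0) :=
      Finset.eq_of_subset_of_card_le hsub (by omega)
    set φ : AdjoinRoot gperp →ₗ[F] F × F :=
      LinearMap.prod (L.comp (LinearMap.mulLeft F β)) L with hφdef
    have hφapp : ∀ x, φ x = (L (β * x), L x) := fun x => rfl
    have hkey : ∃ x, L x = 0 ∧ L (β * x) ≠ 0 := by
      by_contra hcon
      push_neg at hcon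
      have hj : ∀ (j : ℕ) (x : AdjoinRoot gperp), L x = 0 → L (β ^ j * x) = 0 := by
        intro j
        induction j with
        | zero => intro x hx; simpa using hx
        | succ j ih =>
          intro x hx
          have h1 := hcon _ (ih x hx)
          rw [pow_succ', mul_assoc]
          exact h1
      have hker : ∃ x : AdjoinRoot gperp, x ≠ 0 ∧ L x = 0 := by
        by_contra hkc
        push_neg at hkc
        have hLinj : Function.Injective L := by
          intro x y hxy
          by_contra hne2
          exact hkc (x - y) (sub_ne_zero.mpr hne2) (by rw [map_sub, hxy, sub_self])
        have hle := Fintype.card_le_of_injective L hLinj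
        rw [hcardK] at hle
        have h6 : Fintype.card F * Fintype.card F ≤ Fintype.card F := le_trans hqq hle
        have h7 : Fintype.card F * 2 ≤ Fintype.card F * Fintype.card F :=
          Nat.mul_le_mul_left _ hq2
        omega
      obtain ⟨x, hx0, hxL⟩ := hker
      have hγ : ∃ p : Polynomial F, (Polynomial.aeval α) p = β ^ (n - k) * x⁻¹ := by
        have h1 : (β ^ (n - k) * x⁻¹) ∈ Algebra.adjoin F {α} := by
          rw [AdjoinRoot.adjoinRoot_eq_top]; trivial
        rw [Algebra.adjoin_singleton_eq_range_aeval] at h1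
        exact h1
      obtain ⟨p, hp⟩ := hγ
      have hβn1 : α = β ^ (n - 1) := by
        have h1 : β ^ (n-1) * β = 1 := by
          rw [← pow_succ]
          have h2 : n - 1 + 1 = n := by omega
          rw [h2, hβn]
        have h3 : β ^ (n-1) = β⁻¹ := eq_inv_of_mul_eq_one_left h1
        rw [h3, hβdef, inv_inv]
      have h2 : L ((Polynomial.aeval α) p * x) = 0 := by
        rw [Polynomial.aeval_eq_sum_range, Finset.sum_mul, map_sum]
        apply Finset.sum_eq_zero
        intro i _
        rw [smul_mul_assoc, map_smul]
        have h3 : α ^ i * x = β ^ ((n-1) * i) * x := by rw [hβn1, ← pow_mul]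
        rw [h3, hj _ x hxL, smul_zero]
      rw [hp, mul_assoc, inv_mul_cancel₀ hx0, mul_one, hLβnk] at h2
      exact one_ne_zero h2
    obtain ⟨x₁, hx₁L, hx₁β⟩ := hkey
    have hsurj : Function.Surjective φ := by
      intro pr
      obtain ⟨a, b⟩ := pr
      set y := β ^ (n - k) with hy
      set x' := (L (β * x₁))⁻¹ • x₁ with hx'
      have hx'1 : L x' = 0 := by rw [hx', map_smul, hx₁L, smul_zero]
      have hx'2 : L (β * x') = 1 := by
        rw [hx', mul_smul_comm, map_smul, smul_eq_mul, inv_mul_cancel₀ hx₁β]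
      refine ⟨b • y + (a - b * L (β * y)) • x', ?_⟩
      rw [hφapp]
      have e1 : L (b • y + (a - b * L (β * y)) • x') = b := by
        rw [map_add, map_smul, map_smul, hx'1, hy, hLβnk, smul_eq_mul, smul_eq_mul]
        ring
      have e2 : L (β * (b • y + (a - b * L (β * y)) • x')) = a := by
        rw [mul_add, mul_smul_comm, mul_smul_comm, map_add, map_smul, map_smul, hx'2,
          smul_eq_mul, smul_eq_mul]
        ring
      rw [e1, e2]
    have hQne : ∀ x : AdjoinRoot gperp, (L (β * x) < L x) → x ≠ 0 := by
      intro x h hx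
      rw [hx, mul_zero] at h
      exact lt_irrefl _ h
    have hstep1 : ((range n).filter (fun j => L (β ^ (j+1)) < L (β ^ j))).card
        = ((range n).filter (fun j => L (β * β ^ j) < L (β ^ j))).card := by
      congr 1
      apply Finset.filter_congr
      intro j _
      rw [pow_succ']
    have hstep2 : ((range n).filter (fun j => L (β * β ^ j) < L (β ^ j))).card
        = (Finset.univ.filter (fun x : AdjoinRoot gperp => L (β * x) < L x)).card := by
      have h1 : ((range n).filter (fun j => L (β * β ^ j) < L (β ^ j))).card
          = (((range n).filter (fun j => L (β * β ^ j) < L (β ^ j))).image (β ^ ·)).card := by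
        rw [Finset.card_image_of_injOn (hinjOn.mono (by
          intro x hx
          simp only [Finset.coe_filter, Set.mem_setOf_eq, Finset.mem_range] at hx
          simp only [Finset.coe_range, Set.mem_Iio]
          exact hx.1))]
      have himg2 : ((range n).filter (fun j => L (β * β ^ j) < L (β ^ j))).image (β ^ ·)
          = ((range n).image (β ^ ·)).filter (fun x => L (β * x) < L x) := by
        ext x
        simp only [Finset.mem_image, Finset.mem_filter, Finset.mem_range]
        constructor
        · rintro ⟨j, ⟨hj, hQ⟩, rfl⟩
          exact ⟨⟨j, hj, rfl⟩, hQ⟩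
        · rintro ⟨⟨j, hj, rfl⟩, hQ⟩
          exact ⟨j, ⟨hj, hQ⟩, rfl⟩
      rw [h1, himg2, himage, Finset.filter_filter]
      congr 1
      apply Finset.filter_congr
      intro x _
      constructor
      · intro h; exact h.2
      · intro h; exact ⟨hQne x h, h⟩
    have hfib : ∀ pr : F × F, (Finset.univ.filter (fun x => φ x = pr)).card
        = (Finset.univ.filter (fun x : AdjoinRoot gperp => φ x = 0)).card := by
      intro pr
      obtain ⟨x₀, hx₀⟩ := hsurj pr
      apply Finset.card_bij' (fun x _ => x - x₀) (fun x _ => x + x₀)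
      · intro x hx
        simp only [Finset.mem_filter, Finset.mem_univ, true_and] at *
        rw [map_sub, hx, hx₀, sub_self]
      · intro x hx
        simp only [Finset.mem_filter, Finset.mem_univ, true_and] at *
        rw [map_add, hx, hx₀, zero_add]
      · intro x _; exact sub_add_cancel x x₀
      · intro x _; exact add_sub_cancel_right x x₀
    have htotal : Fintype.card F ^ k
        = (Fintype.card F * Fintype.card F)
          * (Finset.univ.filter (fun x : AdjoinRoot gperp => φ x = 0)).card := by
      rw [← hcardK, ← Finset.card_univ]
      rw [Finset.card_eq_sum_card_fiberwise
        (f := φ) (t := Finset.univ) (fun x _ => Finset.mem_univ _)]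
      rw [Finset.sum_congr rfl (fun pr _ => hfib pr)]
      rw [Finset.sum_const, smul_eq_mul, Finset.card_univ, Fintype.card_prod]
    have hmain : (Finset.univ.filter (fun x : AdjoinRoot gperp => L (β * x) < L x)).card
        = (Finset.univ.filter (fun pr : F × F => pr.1 < pr.2)).card
          * (Finset.univ.filter (fun x : AdjoinRoot gperp => φ x = 0)).card := by
      rw [Finset.card_eq_sum_card_fiberwise
        (f := φ) (s := Finset.univ.filter (fun x : AdjoinRoot gperp => L (β * x) < L x))
        (t := Finset.univ.filter (fun pr : F × F => pr.1 < pr.2)) (by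
          intro x hx
          simp only [Finset.mem_coe, Finset.mem_filter, Finset.mem_univ, true_and] at *
          rw [hφapp]
          exact hx)]
      have hsum1 : ∑ pr ∈ Finset.univ.filter (fun pr : F × F => pr.1 < pr.2),
            ((Finset.univ.filter (fun x : AdjoinRoot gperp => L (β * x) < L x)).filter
              (fun x => φ x = pr)).card
          = ∑ _pr ∈ Finset.univ.filter (fun pr : F × F => pr.1 < pr.2),
            (Finset.univ.filter (fun x : AdjoinRoot gperp => φ x = 0)).card := by
        apply Finset.sum_congr rfl
        intro pr hpr
        have hpr' : pr.1 < pr.2 := by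
          simp only [Finset.mem_filter, Finset.mem_univ, true_and] at hpr
          exact hpr
        have heq : (Finset.univ.filter
              (fun x : AdjoinRoot gperp => L (β * x) < L x)).filter (fun x => φ x = pr)
            = Finset.univ.filter (fun x => φ x = pr) := by
          ext x
          simp only [Finset.mem_filter, Finset.mem_univ, true_and]
          constructor
          · intro h; exact h.2
          · intro h
            refine ⟨?_, h⟩
            have hthis := hφapp x
            rw [h] at hthis
            have h1 : pr.1 = L (β * x) := by rw [hthis]
            have h2 : pr.2 = L x := by rw [hthis]
            rw [← h1, ← h2]
            exact hpr'
        rw [heq]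
        exact hfib pr
      rw [hsum1, Finset.sum_const, smul_eq_mul]
    have hN : (Finset.univ.filter (fun x : AdjoinRoot gperp => φ x = 0)).card
        = Fintype.card F ^ (k - 2) := by
      have h1 : Fintype.card F ^ k
          = (Fintype.card F * Fintype.card F) * Fintype.card F ^ (k-2) := by
        have h2 : k = 2 + (k - 2) := by omega
        calc Fintype.card F ^ k = Fintype.card F ^ (2 + (k-2)) := by rw [← h2]
        _ = Fintype.card F ^ 2 * Fintype.card F ^ (k-2) := by rw [pow_add]
        _ = (Fintype.card F * Fintype.card F) * Fintype.card F ^ (k-2) := by rw [pow_two]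
      have h3 := htotal
      rw [h1] at h3
      exact (Nat.eq_of_mul_eq_mul_left (by positivity) h3).symm
    rw [hcdes, hstep1, hstep2, hmain, hN]
    have hD := auxPairs F
    calc 2 * ((Finset.univ.filter (fun pr : F × F => pr.1 < pr.2)).card
          * Fintype.card F ^ (k - 2))
        = (2 * (Finset.univ.filter (fun pr : F × F => pr.1 < pr.2)).card)
          * Fintype.card F ^ (k - 2) := by ring
    _ = (Fintype.card F * Fintype.card F - Fintype.card F) * Fintype.card F ^ (k-2) := by
        rw [hD]
    _ = (Fintype.card F - 1) * (Fintype.card F * Fintype.card F ^ (k-2)) := by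
        rw [← mul_assoc, Nat.sub_one_mul]
    _ = (Fintype.card F - 1) * Fintype.card F ^ (k-1) := by
        rw [← pow_succ']
        congr 2
        omega
  · -- non-primitive implies the cdes identity fails
    intro hcd
    by_contra hne'
    have hne : orderOf α ≠ n := fun h => hne' h
    have hedvd : orderOf α ∣ n := orderOf_dvd_of_pow_eq_one hαn
    have he0 : orderOf α ≠ 0 := by
      intro h
      rw [h] at hedvd
      exact (by omega : n ≠ 0) (zero_dvd_iff.mp hedvd)
    have hen : orderOf α < n := lt_of_le_of_ne (Nat.le_of_dvd hn0 hedvd) hne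
    set e := orderOf α with he
    have hβe : β ^ e = 1 := by
      rw [hβdef, inv_pow, pow_orderOf_eq_one, inv_one]
    set m := n / e with hm
    have hme : m * e = n := Nat.div_mul_cancel hedvd
    have hm1 : 1 < m := by
      rcases Nat.lt_or_ge m 2 with h | h
      · interval_cases m <;> omega
      · omega
    have hcount : cdes w
        = m * ∑ j ∈ range e, (if L (β ^ (j % e + 1)) < L (β ^ (j % e)) then 1 else 0) := by
      rw [hcdes, Finset.card_filter]
      have h1 : ∀ j ∈ range n, (if L (β ^ (j+1)) < L (β ^ j) then (1:ℕ) else 0)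
          = (if L (β ^ (j % e + 1)) < L (β ^ (j % e)) then 1 else 0) := by
        intro j _
        have e1 : β ^ j = β ^ (j % e) := hmod e hβe j
        have e2 : β ^ (j + 1) = β ^ (j % e + 1) := by
          rw [pow_succ, e1, ← pow_succ]
        rw [e1, e2]
      rw [Finset.sum_congr rfl h1, ← hme]
      exact auxSumMod (f := fun j => if L (β ^ (j + 1)) < L (β ^ j) then 1 else 0) e m
    have hdvd : m ∣ cdes w := ⟨_, hcount⟩
    rcases hq with h2 | h3
    · rw [h2] at hcd hn
      have hpow2k : (2:ℕ)^(k-1) = 2 * 2^(k-2) := by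
        rw [← pow_succ']
        congr 1
        omega
      have hc : cdes w = 2 ^ (k - 2) := by omega
      rw [hc] at hdvd
      obtain ⟨t, ht, hmt⟩ := (Nat.dvd_prime_pow Nat.prime_two).mp hdvd
      rcases Nat.eq_zero_or_pos t with h | h
      · rw [h, pow_zero] at hmt; omega
      · have h2m : 2 ∣ m := by rw [hmt]; exact dvd_pow_self 2 (by omega)
        have h2n : (2:ℕ) ∣ n := dvd_trans h2m ⟨e, hme.symm⟩
        have h2k : (2:ℕ) ∣ 2 ^ k := dvd_pow_self 2 (by omega)
        have h1k : (1:ℕ) ≤ 2 ^ k := Nat.one_le_two_pow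
        omega
    · rw [h3] at hcd hn
      have hc : cdes w = 3 ^ (k - 1) := by omega
      rw [hc] at hdvd
      obtain ⟨t, ht, hmt⟩ := (Nat.dvd_prime_pow Nat.prime_three).mp hdvd
      rcases Nat.eq_zero_or_pos t with h | h
      · rw [h, pow_zero] at hmt; omega
      · have h3m : 3 ∣ m := by rw [hmt]; exact dvd_pow_self 3 (by omega)
        have h3n : (3:ℕ) ∣ n := dvd_trans h3m ⟨e, hme.symm⟩
        have h3k : (3:ℕ) ∣ 3 ^ k := dvd_pow_self 3 (by omega)
        have h1k : (1:ℕ) ≤ 3 ^ k := Nat.one_le_pow _ _ (by omega)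
        omega
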